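/- Let α ∈ [0, 1] and set C := −α²/2 + (2√2/3)·(α²/2)^{3/2} + 1/6. Then both u_min := α²/2 and u_max := (9/8)·(1/2 − α/3 + (1/6)·√(9 + 12α − 12α²))² are nonnegative solutions of the equation −u + (2√2/3)·u^{3/2} + 1/6 = C, and u_min ≤ u_max ≤ 9/8, with 0 < u_min < u_max < 9/8 when α ∈ (0,1) and u_min = u_max = 1/2 when α = 1. -/
import Mathlib


open Set

lemma rpow_three_halves (x : ℝ) (hx : 0 ≤ x) :
    x ^ ((3:ℝ)/2) = Real.sqrt x ^ 3 := by
  rw [Real.sqrt_eq_rpow, ← Real.rpow_natCast (x ^ ((1:ℝ)/2)) 3,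
    ← Real.rpow_mul hx]
  norm_num

lemma stmt_16_aux (α s : ℝ) (hα0 : 0 ≤ α) (hα1 : α ≤ 1)
    (hs0 : 0 ≤ s) (hs2 : s ^ 2 = 9 + 12*α - 12*α^2) :
    (- ((9:ℝ)/8 * (1/2 - α/3 + 1/6 * s)^2)
      + (9/8) * (1/2 - α/3 + 1/6 * s)^3 + 1/6 = -α^2/2 + α^3/3 + 1/6) ∧
    α^2/2 ≤ (9/8) * (1/2 - α/3 + 1/6 * s)^2 ∧
    (9/8) * (1/2 - α/3 + 1/6 * s)^2 ≤ 9/8 ∧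
    (0 < α → α < 1 →
      α^2/2 < (9/8) * (1/2 - α/3 + 1/6 * s)^2 ∧
      (9/8) * (1/2 - α/3 + 1/6 * s)^2 < 9/8) ∧
    (α = 1 → (9/8) * (1/2 - α/3 + 1/6 * s)^2 = 1/2) := by
  have hs3 : 3 ≤ s := by nlinarith
  have hsle : s ≤ 3 + 2*α := by nlinarith
  have hsge : 6*α - 3 ≤ s := by nlinarith [mul_nonneg hα0 (by linarith : (0:ℝ) ≤ 1 - α)]
  refine ⟨?_, ?_, ?_, ?_, ?_⟩
  · linear_combination (1/64 - α/32 + s/192) * hs2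
  · nlinarith [mul_nonneg (by linarith : (0:ℝ) ≤ 3/2*(1/2 - α/3 + 1/6*s) - α)
      (by linarith : (0:ℝ) ≤ 3/2*(1/2 - α/3 + 1/6*s) + α)]
  · nlinarith
  · intro h0 h1
    have hslt : s < 3 + 2*α := by nlinarith [mul_pos h0 h0]
    have hsgt : 6*α - 3 < s := by nlinarith [mul_pos h0 (by linarith : (0:ℝ) < 1 - α)]
    constructor
    · nlinarith [mul_pos (by linarith : (0:ℝ) < 3/2*(1/2 - α/3 + 1/6*s) - α)
        (by linarith : (0:ℝ) < 3/2*(1/2 - α/3 + 1/6*s) + α)]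
    · nlinarith
  · intro h1
    subst h1
    have : s = 3 := by nlinarith
    rw [this]; norm_num

/-- For `α ∈ [0, 1]` and `C = V(α²/2, 0)`, the numbers `u_min = α²/2` and
`u_max = (9/8)(1/2 − α/3 + (1/6)√(9 + 12α − 12α²))²` are nonnegative solutions
of `−u + (2√2/3)u^{3/2} + 1/6 = C`, with `u_min ≤ u_max ≤ 9/8`, strictly
ordered in `(0, 9/8)` for `α ∈ (0,1)`, and both equal to `1/2` for `α = 1`. -/
theorem stmt_16
    (α : ℝ) (hα : α ∈ Icc (0:ℝ) 1) :
    let C : ℝ := -α^2/2 + (2 * Real.sqrt 2 / 3) * (α^2/2) ^ ((3:ℝ)/2) + 1/6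
    let umin : ℝ := α^2/2
    let umax : ℝ :=
      (9/8) * (1/2 - α/3 + (1/6) * Real.sqrt (9 + 12*α - 12*α^2))^2
    0 ≤ umin ∧ 0 ≤ umax ∧
    (-umin + (2 * Real.sqrt 2 / 3) * umin ^ ((3:ℝ)/2) + 1/6 = C) ∧
    (-umax + (2 * Real.sqrt 2 / 3) * umax ^ ((3:ℝ)/2) + 1/6 = C) ∧
    umin ≤ umax ∧ umax ≤ 9/8 ∧
    (0 < α → α < 1 → 0 < umin ∧ umin < umax ∧ umax < 9/8) ∧
    (α = 1 → umin = 1/2 ∧ umax = 1/2) := by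
  obtain ⟨hα0, hα1⟩ := hα
  intro C umin umax
  have h2 : Real.sqrt 2 ^ 2 = 2 := Real.sq_sqrt (by norm_num)
  have h2p : (0:ℝ) < Real.sqrt 2 := Real.sqrt_pos.mpr (by norm_num)
  have harg : (0:ℝ) ≤ 9 + 12*α - 12*α^2 := by nlinarith
  have hs0 : 0 ≤ Real.sqrt (9 + 12*α - 12*α^2) := Real.sqrt_nonneg _
  have hs2 : Real.sqrt (9 + 12*α - 12*α^2) ^ 2 = 9 + 12*α - 12*α^2 := Real.sq_sqrt harg
  set s : ℝ := Real.sqrt (9 + 12*α - 12*α^2) with hs_def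
  have hs3 : 3 ≤ s := by nlinarith
  have ht0 : (0:ℝ) < 1/2 - α/3 + (1/6) * s := by nlinarith
  -- sqrt computations
  have hsqmin : Real.sqrt (α^2/2) = α * Real.sqrt 2 / 2 := by
    rw [show α^2/2 = (α * Real.sqrt 2 / 2)^2 by rw [div_pow, mul_pow, h2]; ring]
    exact Real.sqrt_sq (by positivity)
  have hrpmin : (α^2/2) ^ ((3:ℝ)/2) = α^3 * Real.sqrt 2 / (3 * 2) * (3/2) := by
    rw [rpow_three_halves _ (by positivity), hsqmin]
    have : (α * Real.sqrt 2 / 2)^3 = α^3 * (Real.sqrt 2 ^ 2 * Real.sqrt 2) / 8 := by ring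
    rw [this, h2]; ring
  have hCval : C = -α^2/2 + α^3/3 + 1/6 := by
    show -α^2/2 + (2 * Real.sqrt 2 / 3) * (α^2/2) ^ ((3:ℝ)/2) + 1/6 = _
    rw [hrpmin]
    have hne : Real.sqrt 2 ≠ 0 := ne_of_gt h2p
    linear_combination (α^3/6) * h2
  have humax : umax = (9/8) * (1/2 - α/3 + 1/6 * s)^2 := by
    show (9/8) * (1/2 - α/3 + (1/6) * s)^2 = _
    ring
  have hsqmax : Real.sqrt umax = 3 * Real.sqrt 2 * (1/2 - α/3 + 1/6 * s) / 4 := by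
    rw [humax, show (9/8 : ℝ) * (1/2 - α/3 + 1/6 * s)^2
        = (3 * Real.sqrt 2 * (1/2 - α/3 + 1/6 * s) / 4)^2 by
      rw [div_pow, mul_pow, mul_pow, h2]; ring]
    exact Real.sqrt_sq (by positivity)
  have hrpmax : umax ^ ((3:ℝ)/2)
      = 27 * Real.sqrt 2 * (1/2 - α/3 + 1/6 * s)^3 / 32 := by
    rw [rpow_three_halves umax (by rw [humax]; positivity), hsqmax]
    have : (3 * Real.sqrt 2 * (1/2 - α/3 + 1/6 * s) / 4)^3
        = 27 * (Real.sqrt 2 ^ 2 * Real.sqrt 2) * (1/2 - α/3 + 1/6 * s)^3 / 64 := by ring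
    rw [this, h2]; ring
  obtain ⟨heq, hle1, hle2, hstrict, hone⟩ := stmt_16_aux α s hα0 hα1 hs0 hs2
  have huminEq : -umin + (2 * Real.sqrt 2 / 3) * umin ^ ((3:ℝ)/2) + 1/6 = C := by
    show -(α^2/2) + (2 * Real.sqrt 2 / 3) * (α^2/2) ^ ((3:ℝ)/2) + 1/6
      = -α^2/2 + (2 * Real.sqrt 2 / 3) * (α^2/2) ^ ((3:ℝ)/2) + 1/6
    ring
  refine ⟨by positivity, by rw [humax]; positivity, huminEq, ?_, ?_, ?_, ?_, ?_⟩
  · rw [hrpmax, hCval, humax]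
    have : (2 * Real.sqrt 2 / 3) * (27 * Real.sqrt 2 * (1/2 - α/3 + 1/6 * s)^3 / 32)
        = (9/8) * (1/2 - α/3 + 1/6 * s)^3 := by
      have h : (2 * Real.sqrt 2 / 3) * (27 * Real.sqrt 2 * (1/2 - α/3 + 1/6 * s)^3 / 32)
          = (Real.sqrt 2 ^ 2) * (27 * (1/2 - α/3 + 1/6 * s)^3) / 48 := by ring
      rw [h, h2]; ring
    rw [this]
    linarith [heq]
  · show α^2/2 ≤ umax
    rw [humax]; exact hle1
  · rw [humax]; exact hle2
  · intro h0 h1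
    obtain ⟨ha, hb⟩ := hstrict h0 h1
    exact ⟨by show (0:ℝ) < α^2/2; positivity, by show α^2/2 < umax; rw [humax]; exact ha,
      by rw [humax]; exact hb⟩
  · intro h1
    refine ⟨by show α^2/2 = 1/2; rw [h1]; norm_num, ?_⟩
    rw [humax]; exact hone h1
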